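/- If p is a polynomial of degree n having all its zeros in the disk |z| ≤ k where k ≥ 0, then for every R ≥ r > 0 with rR ≥ k², and every z with |z| = 1, |p(Rz)| ≥ ((R+k)/(r+k))^n |p(rz)|. -/

import Mathlib

open Polynomial Metric Set

noncomputable def maxSphere (P : Polynomial ℂ) : ℝ :=
  sSup ((fun w => ‖P.eval w‖) '' sphere (0:ℂ) 1)

noncomputable def minSphere (P : Polynomial ℂ) : ℝ :=
  sInf ((fun w => ‖P.eval w‖) '' sphere (0:ℂ) 1)

lemma prod_map_le_aux (f g : ℂ → ℝ) :
    ∀ (s : Multiset ℂ), (∀ a ∈ s, 0 ≤ f a) → (∀ a ∈ s, f a ≤ g a) →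
      (s.map f).prod ≤ (s.map g).prod := by
  intro s
  induction s using Multiset.induction_on with
  | empty => simp
  | cons a s ih =>
    intro h0 h
    simp only [Multiset.map_cons, Multiset.prod_cons]
    have hf : 0 ≤ (Multiset.map f s).prod := by
      apply Multiset.prod_nonneg
      intro x hx
      obtain ⟨a', ha', rfl⟩ := Multiset.mem_map.mp hx
      exact h0 a' (Multiset.mem_cons_of_mem ha')
    exact mul_le_mul (h a (Multiset.mem_cons_self a s))
      (ih (fun b hb => h0 b (Multiset.mem_cons_of_mem hb))
          (fun b hb => h b (Multiset.mem_cons_of_mem hb)))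
      hf (le_trans (h0 a (Multiset.mem_cons_self a s)) (h a (Multiset.mem_cons_self a s)))

lemma key_ineq (k r R : ℝ) (hk : 0 ≤ k) (hr : 0 < r) (hrR : r ≤ R) (hkr : k ^ 2 ≤ r * R)
    (z w : ℂ) (hz : ‖z‖ = 1) (hw : ‖w‖ ≤ k) :
    (R + k) / (r + k) * ‖(r : ℂ) * z - w‖ ≤ ‖(R : ℂ) * z - w‖ := by
  have hrk : 0 < r + k := by linarith
  rw [div_mul_eq_mul_div, div_le_iff₀ hrk]
  set s : ℝ := ‖w‖ with hs
  set t : ℝ := (z * (starRingEnd ℂ) w).re with ht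
  have hs0 : 0 ≤ s := norm_nonneg w
  have hts : |t| ≤ s := by
    calc |t| ≤ ‖z * (starRingEnd ℂ) w‖ := Complex.abs_re_le_norm _
    _ = s := by rw [norm_mul, Complex.norm_conj, hz, one_mul]
  have habs : ∀ c : ℝ, (‖(c : ℂ) * z - w‖) ^ 2 = c ^ 2 + s ^ 2 - 2 * c * t := by
    intro c
    rw [← Complex.normSq_eq_norm_sq, Complex.normSq_sub]
    rw [Complex.normSq_mul, Complex.normSq_ofReal, ← Complex.normSq_eq_norm_sq]
    have h1 : Complex.normSq z = 1 := by
      rw [← Complex.sq_norm, hz, one_pow]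
    have h2 : ((c : ℂ) * z * (starRingEnd ℂ) w).re = c * t := by
      rw [mul_assoc, Complex.re_ofReal_mul]
    rw [h1, h2]
    ring
  have hA := norm_nonneg ((r : ℂ) * z - w)
  have hB := norm_nonneg ((R : ℂ) * z - w)
  have hsq : ((R + k) * ‖(r : ℂ) * z - w‖) ^ 2 ≤
      (‖(R : ℂ) * z - w‖ * (r + k)) ^ 2 := by
    rw [mul_pow, mul_pow, habs r, habs R]
    have h1 : 0 ≤ (R - r) * (r * R - k ^ 2) * (t + s) := by
      apply mul_nonneg
      · apply mul_nonneg <;> linarith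
      · have := neg_abs_le t; linarith
    have h2 : 0 ≤ (R - r) * (k - s) * ((r + k) * (R + s) + (R + k) * (r + s)) := by
      apply mul_nonneg
      · apply mul_nonneg <;> linarith
      · have := abs_nonneg t
        nlinarith
    nlinarith [sq_nonneg (R + k), sq_nonneg (r + k)]
  have h0 : 0 ≤ (R + k) * ‖(r : ℂ) * z - w‖ := by
    apply mul_nonneg (by linarith) hA
  have h0' : 0 ≤ ‖(R : ℂ) * z - w‖ * (r + k) := by
    apply mul_nonneg hB (by linarith)
  nlinarith [hsq, h0, h0']

theorem stmt_9 (n : ℕ) (p : Polynomial ℂ) (hp : p.natDegree = n)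
    (k : ℝ) (hk : 0 ≤ k)
    (hzeros : ∀ z : ℂ, p.eval z = 0 → ‖z‖ ≤ k)
    (r R : ℝ) (hr : 0 < r) (hrR : r ≤ R) (hkr : k ^ 2 ≤ r * R) :
    ∀ z : ℂ, ‖z‖ = 1 →
      ((R + k) / (r + k)) ^ n * ‖p.eval (r * z)‖ ≤
        ‖p.eval (R * z)‖ := by
  intro z hz
  have hp0 : p ≠ 0 := by
    intro h
    have := hzeros ((k + 1 : ℝ) : ℂ) (by simp [h])
    rw [Complex.norm_real, Real.norm_eq_abs] at this
    have : |k + 1| = k + 1 := abs_of_nonneg (by linarith)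
    have := hzeros ((k + 1 : ℝ) : ℂ) (by simp [h])
    rw [Complex.norm_real, Real.norm_eq_abs, abs_of_nonneg (by linarith : (0:ℝ) ≤ k + 1)] at this
    linarith
  have hsplit : p.Splits := IsAlgClosed.splits p
  have heq := hsplit.eq_prod_roots
  have hcard : p.roots.card = n := by
    rw [← hp]
    exact (Polynomial.splits_iff_card_roots.mp hsplit)
  have heval : ∀ w : ℂ, ‖p.eval w‖ =
      ‖p.leadingCoeff‖ * (p.roots.map (fun a => ‖w - a‖)).prod := by
    intro w
    conv_lhs => rw [heq]
    rw [Polynomial.eval_mul, Polynomial.eval_C, Polynomial.eval_multiset_prod, norm_mul,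
      Multiset.map_map]
    congr 1
    rw [← normHom_apply, map_multiset_prod, Multiset.map_map]
    congr 1
    ext a
    simp
  rw [heval, heval]
  have hroots : ∀ a ∈ p.roots, ‖a‖ ≤ k := by
    intro a ha
    exact hzeros a ((Polynomial.mem_roots hp0).mp ha)
  have hprod : ((R + k) / (r + k)) ^ n *
      (p.roots.map (fun a => ‖(r : ℂ) * z - a‖)).prod ≤
      (p.roots.map (fun a => ‖(R : ℂ) * z - a‖)).prod := by
    have hpow : ((R + k) / (r + k)) ^ n =
        (p.roots.map (fun _ : ℂ => (R + k) / (r + k))).prod := by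
      rw [Multiset.map_const', Multiset.prod_replicate, hcard]
    rw [hpow, ← Multiset.prod_map_mul]
    apply prod_map_le_aux
    · intro a ha
      apply mul_nonneg
      · apply div_nonneg <;> linarith
      · exact norm_nonneg _
    · intro a ha
      exact key_ineq k r R hk hr hrR hkr z a hz (hroots a ha)
  have hc : 0 ≤ ‖p.leadingCoeff‖ := norm_nonneg _
  calc ((R + k) / (r + k)) ^ n * (‖p.leadingCoeff‖ *
        (p.roots.map (fun a => ‖(r : ℂ) * z - a‖)).prod)
      = ‖p.leadingCoeff‖ * (((R + k) / (r + k)) ^ n *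
        (p.roots.map (fun a => ‖(r : ℂ) * z - a‖)).prod) := by ring
    _ ≤ ‖p.leadingCoeff‖ *
        (p.roots.map (fun a => ‖(R : ℂ) * z - a‖)).prod :=
        mul_le_mul_of_nonneg_left hprod hc
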